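/- Let (γ_j)_{j≥1} be the partial sums of i.i.d. exponential random variables with rate c > 0 (γ_0 = 0). Then E[∏_{i=1}^∞ (1 − e^{−γ_i})] = e^{−c}, where the infinite product converges almost surely. -/

import Mathlib

open MeasureTheory ProbabilityTheory Real Set Filter
open scoped ENNReal NNReal Topology

namespace Stmt4Aux

variable {c : ℝ}

lemma pdf_eval (hc : 0 < c) {s : ℝ} (hs : 0 ≤ s) :
    exponentialPDFReal c s = c * rexp (-(c * s)) := by
  simp only [exponentialPDFReal, gammaPDFReal, if_pos hs]
  simp [Real.Gamma_one]

lemma pdf_neg {s : ℝ} (hs : s < 0) : exponentialPDFReal c s = 0 := by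
  simp only [exponentialPDFReal, gammaPDFReal, if_neg (not_le.mpr hs)]

lemma integral_expMeasure (hc : 0 < c) (f : ℝ → ℝ) :
    ∫ s, f s ∂(expMeasure c) = ∫ s in Ioi 0, (c * rexp (-(c * s))) * f s := by
  have hmd : Measurable (fun x => (exponentialPDFReal c x).toNNReal) :=
    (measurable_exponentialPDFReal c).real_toNNReal
  have h1 : ∫ s, f s ∂(expMeasure c)
      = ∫ s, (exponentialPDFReal c s).toNNReal • f s := by
    rw [show expMeasure c = volume.withDensity
        (fun x => ((exponentialPDFReal c x).toNNReal : ℝ≥0∞)) from rfl]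
    exact integral_withDensity_eq_integral_smul hmd f
  rw [h1]
  have h2 : ∀ s : ℝ, (exponentialPDFReal c s).toNNReal • f s = exponentialPDFReal c s * f s := by
    intro s
    rw [NNReal.smul_def, Real.coe_toNNReal _ (exponentialPDFReal_nonneg hc s), smul_eq_mul]
  simp_rw [h2]
  have hne : ∀ᵐ s : ℝ, s ≠ (0:ℝ) := by
    rw [ae_iff]
    have : {s : ℝ | ¬ s ≠ 0} = {(0:ℝ)} := by ext s; simp
    rw [this]
    exact measure_singleton 0
  rw [← setIntegral_eq_integral_of_ae_compl_eq_zero (s := Ioi (0:ℝ)) ?h0]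
  · exact setIntegral_congr_fun measurableSet_Ioi fun s hs => by
      rw [pdf_eval hc (le_of_lt hs)]
  case h0 =>
    filter_upwards [hne] with s hs h's
    have : s < 0 := lt_of_le_of_ne (not_lt.mp h's) hs
    rw [pdf_neg this, zero_mul]

lemma expMeasure_Iio (hc : 0 < c) : expMeasure c (Iio 0) = 0 := by
  rw [show expMeasure c = volume.withDensity (exponentialPDF c) from rfl,
    withDensity_apply _ measurableSet_Iio]
  exact lintegral_exponentialPDF_of_nonpos le_rfl

lemma expMeasure_ae_pos (hc : 0 < c) : ∀ᵐ s ∂(expMeasure c), 0 < s := by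
  have h0 : expMeasure c {0} = 0 := by
    have : (volume : Measure ℝ) {(0:ℝ)} = 0 := measure_singleton 0
    exact measure_mono_null (by simp) <|
      (withDensity_absolutelyContinuous volume (exponentialPDF c)) this
  have : expMeasure c (Iic 0) = 0 := by
    rw [show Iic (0:ℝ) = Iio 0 ∪ {0} by ext s; simp [le_iff_lt_or_eq]]
    exact measure_union_null (expMeasure_Iio hc) h0
  rw [ae_iff]
  convert this using 2
  ext s; simp [not_lt]


noncomputable def Hf (c x : ℝ) : ℝ := (1 - rexp (-x)) * rexp (-(c * rexp (-x)))

lemma continuous_Hf : Continuous (Hf c) := by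
  unfold Hf
  continuity

lemma Hf_nonneg {x : ℝ} (hx : 0 ≤ x) : 0 ≤ Hf c x := by
  have h1 : rexp (-x) ≤ 1 := Real.exp_le_one_iff.mpr (by linarith)
  exact mul_nonneg (by linarith) (le_of_lt (Real.exp_pos _))

lemma Hf_le_one (hc : 0 < c) {x : ℝ} (hx : 0 ≤ x) : Hf c x ≤ 1 := by
  have h1 : rexp (-x) ≤ 1 := Real.exp_le_one_iff.mpr (by linarith)
  have h2 : 0 < rexp (-x) := Real.exp_pos _
  have h3 : rexp (-(c * rexp (-x))) ≤ 1 :=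
    Real.exp_le_one_iff.mpr (neg_nonpos.mpr (by positivity))
  have h4 : 0 < rexp (-(c * rexp (-x))) := Real.exp_pos _
  unfold Hf
  nlinarith

lemma one_sub_Hf_le (hc : 0 < c) {x : ℝ} (hx : 0 ≤ x) :
    1 - Hf c x ≤ (1 + c) * rexp (-x) := by
  have h1 : rexp (-x) ≤ 1 := Real.exp_le_one_iff.mpr (by linarith)
  have h2 : 0 < rexp (-x) := Real.exp_pos _
  have h5 : 0 ≤ c * rexp (-x) := by positivity
  have h3 : 1 - c * rexp (-x) ≤ rexp (-(c * rexp (-x))) := by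
    have := Real.add_one_le_exp (-(c * rexp (-x)))
    linarith
  unfold Hf
  nlinarith

lemma hasDerivAt_neg_lin (a s : ℝ) : HasDerivAt (fun t : ℝ => -(a * t)) (-a) s := by
  have h := HasDerivAt.const_mul (-a) (hasDerivAt_id s)
  simp only [mul_one, id_eq] at h
  convert h using 2
  · rfl
  · rfl
  ring

lemma tendsto_exp_neg_mul (hb : 0 < c) : Tendsto (fun s : ℝ => rexp (-(c * s))) atTop (𝓝 0) := by
  have h : Tendsto (fun s : ℝ => c * s) atTop atTop :=
    Tendsto.const_mul_atTop hb tendsto_id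
  have := Real.tendsto_exp_neg_atTop_nhds_zero.comp h
  simpa [Function.comp_def] using this

lemma integrableOn_exp_neg_mul (hb : 0 < c) :
    IntegrableOn (fun s : ℝ => rexp (-(c * s))) (Ioi 0) := by
  have h : ∀ s : ℝ, -(c * s) = -c * s := fun s => by ring
  simp_rw [h]
  exact exp_neg_integrableOn_Ioi 0 hb

lemma integral_J1' (hc : 0 < c) :
    ∫ s in Ioi (0:ℝ), c * rexp (-((c+1) * s)) = c / (c + 1) := by
  have hc1 : (0:ℝ) < c + 1 := by linarith
  have hderiv : ∀ s ∈ Ici (0:ℝ),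
      HasDerivAt (fun s => -(c/(c+1)) * rexp (-((c+1) * s))) (c * rexp (-((c+1) * s))) s := by
    intro s _
    have h1 : HasDerivAt (fun t : ℝ => -((c+1) * t)) (-(c+1)) s := hasDerivAt_neg_lin _ _
    have h := (h1.exp).const_mul (-(c/(c+1)))
    convert h using 1
    · rfl
    · rfl
    field_simp
  have hint : IntegrableOn (fun s => c * rexp (-((c+1) * s))) (Ioi (0:ℝ)) :=
    (integrableOn_exp_neg_mul hc1).const_mul c
  have htend : Tendsto (fun s => -(c/(c+1)) * rexp (-((c+1) * s))) atTop (𝓝 0) := by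
    simpa using (tendsto_exp_neg_mul hc1).const_mul (-(c/(c+1)))
  rw [integral_Ioi_of_hasDerivAt_of_tendsto' hderiv hint htend]
  norm_num

lemma integral_J2' (hc : 0 < c) (x : ℝ) (hx : 0 ≤ x) :
    ∫ s in Ioi (0:ℝ), (c * rexp (-(c * s))) * Hf c (x + s) = rexp (-(c * rexp (-x))) := by
  have hderiv : ∀ s ∈ Ici (0:ℝ),
      HasDerivAt (fun t => -(rexp (-(c*t)) * rexp (-(c * rexp (-(x+t))))))
        ((c * rexp (-(c * s))) * Hf c (x + s)) s := by
    intro s _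
    have h1 : HasDerivAt (fun t : ℝ => -(x+t)) (-1) s := by
      exact ((hasDerivAt_id s).const_add x).neg
    have h3 : HasDerivAt (fun t : ℝ => -(c * rexp (-(x+t))))
        (-(c * (rexp (-(x+s)) * (-1)))) s := (h1.exp.const_mul c).neg
    have h4 := h3.exp
    have h5 : HasDerivAt (fun t : ℝ => rexp (-(c*t))) (-c * rexp (-(c*s))) s := by
      have h6 : HasDerivAt (fun t : ℝ => -(c*t)) (-c) s := hasDerivAt_neg_lin _ _
      simpa [mul_comm] using h6.exp
    have h7 := (h5.mul h4).neg
    convert h7 using 1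
    · rfl
    · rfl
    · rfl
    simp only [Hf]
    ring
  have hint : IntegrableOn (fun s => (c * rexp (-(c * s))) * Hf c (x + s)) (Ioi (0:ℝ)) := by
    apply Integrable.mono' ((integrableOn_exp_neg_mul hc).const_mul c)
    · exact (((continuous_const.mul
        (Real.continuous_exp.comp (continuous_const.mul continuous_id).neg)).mul
        (continuous_Hf.comp (continuous_const.add continuous_id)))).aestronglyMeasurable
    · filter_upwards [ae_restrict_mem measurableSet_Ioi] with s hs
      have hs' : (0:ℝ) < s := hs
      have hxs : 0 ≤ x + s := by linarith
      rw [Real.norm_eq_abs,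
        abs_of_nonneg (mul_nonneg (by positivity) (Hf_nonneg hxs))]
      have := mul_le_mul_of_nonneg_left (Hf_le_one hc hxs) (show 0 ≤ c * rexp (-(c*s)) by positivity)
      simpa using this
  have htend : Tendsto (fun t => -(rexp (-(c*t)) * rexp (-(c * rexp (-(x+t)))))) atTop (𝓝 0) := by
    have h1 : Tendsto (fun t : ℝ => rexp (-(c * rexp (-(x+t))))) atTop (𝓝 1) := by
      have ha : Tendsto (fun t : ℝ => rexp (-(x+t))) atTop (𝓝 0) := by
        have hb : Tendsto (fun t : ℝ => -(x+t)) atTop atBot := by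
          apply tendsto_neg_atBot_iff.mpr
          exact tendsto_atTop_add_const_left _ x tendsto_id
        exact Real.tendsto_exp_atBot.comp hb
      have hb2 : Tendsto (fun t : ℝ => -(c * rexp (-(x+t)))) atTop (𝓝 0) := by
        simpa using (ha.const_mul c).neg
      have := (Real.continuous_exp.tendsto 0).comp hb2
      simpa [Function.comp_def] using this
    have := ((tendsto_exp_neg_mul hc).mul h1).neg
    simpa using this
  rw [integral_Ioi_of_hasDerivAt_of_tendsto' hderiv hint htend]
  simp

lemma integral_J1 (hc : 0 < c) :
    ∫ s, rexp (-(max s 0)) ∂(expMeasure c) = c / (c + 1) := by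
  rw [integral_expMeasure hc]
  rw [setIntegral_congr_fun measurableSet_Ioi
    (g := fun s => c * rexp (-((c+1) * s)))]
  · exact integral_J1' hc
  · intro s hs
    have hs' : (0:ℝ) < s := hs
    show c * rexp (-(c * s)) * rexp (-(max s 0)) = c * rexp (-((c+1) * s))
    rw [max_eq_left (le_of_lt hs'), mul_assoc, ← Real.exp_add]
    ring_nf

lemma integral_J2 (hc : 0 < c) {x : ℝ} (hx : 0 ≤ x) :
    ∫ s, Hf c (x + max s 0) ∂(expMeasure c) = rexp (-(c * rexp (-x))) := by
  rw [integral_expMeasure hc]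
  rw [setIntegral_congr_fun measurableSet_Ioi
    (g := fun s => (c * rexp (-(c * s))) * Hf c (x + s))]
  · exact integral_J2' hc x hx
  · intro s hs
    have hs' : (0:ℝ) < s := hs
    show c * rexp (-(c * s)) * Hf c (x + max s 0) = c * rexp (-(c * s)) * Hf c (x + s)
    rw [max_eq_left (le_of_lt hs')]

noncomputable def hf (c : ℝ) : ℕ → ℝ → ℝ
  | 0 => fun _ => 1
  | n+1 => fun x => (1 - rexp (-x)) * ∫ s, hf c n (max x 0 + max s 0) ∂(expMeasure c)

lemma hf_cont_bdd (hc : 0 < c) (n : ℕ) :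
    Continuous (hf c n) ∧ (∀ t : ℝ, 0 ≤ t → 0 ≤ hf c n t ∧ hf c n t ≤ 1) := by
  haveI : IsProbabilityMeasure (expMeasure c) := isProbabilityMeasure_expMeasure hc
  induction n with
  | zero => exact ⟨continuous_const, fun t _ => ⟨zero_le_one, le_rfl⟩⟩
  | succ n ih =>
    obtain ⟨ihc, ihb⟩ := ih
    have hbnd : ∀ x s : ℝ, ‖hf c n (max x 0 + max s 0)‖ ≤ 1 := by
      intro x s
      have h0 : (0:ℝ) ≤ max x 0 + max s 0 := add_nonneg (le_max_right x 0) (le_max_right s 0)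
      rw [Real.norm_eq_abs, abs_le]
      constructor
      · linarith [(ihb _ h0).1]
      · exact (ihb _ h0).2
    have hcont2 : Continuous fun x => ∫ s, hf c n (max x 0 + max s 0) ∂(expMeasure c) := by
      apply continuous_of_dominated (bound := fun _ => 1)
      · intro x
        exact (ihc.comp (continuous_const.add
          (continuous_id.max continuous_const))).aestronglyMeasurable
      · intro x
        filter_upwards with s
        exact hbnd x s
      · exact integrable_const 1
      · filter_upwards with s
        exact ihc.comp ((continuous_id.max continuous_const).add continuous_const)
    have hint : ∀ x : ℝ, Integrable (fun s => hf c n (max x 0 + max s 0)) (expMeasure c) := by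
      intro x
      apply Integrable.mono' (integrable_const 1)
      · exact (ihc.comp (continuous_const.add
          (continuous_id.max continuous_const))).aestronglyMeasurable
      · filter_upwards with s; exact hbnd x s
    refine ⟨(continuous_const.sub (Real.continuous_exp.comp continuous_neg)).mul hcont2, ?_⟩
    intro t ht
    have he : rexp (-t) ≤ 1 := Real.exp_le_one_iff.mpr (by linarith)
    have hi0 : 0 ≤ ∫ s, hf c n (max t 0 + max s 0) ∂(expMeasure c) := by
      apply integral_nonneg
      intro s
      exact (ihb _ (add_nonneg (le_max_right t 0) (le_max_right s 0))).1
    have hi1 : (∫ s, hf c n (max t 0 + max s 0) ∂(expMeasure c)) ≤ 1 := by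
      calc (∫ s, hf c n (max t 0 + max s 0) ∂(expMeasure c))
          ≤ ∫ _s, (1:ℝ) ∂(expMeasure c) := by
            apply integral_mono (hint t) (integrable_const 1)
            intro s
            exact (ihb _ (add_nonneg (le_max_right t 0) (le_max_right s 0))).2
        _ = 1 := by simp
    constructor
    · exact mul_nonneg (by linarith) hi0
    · calc (1 - rexp (-t)) * ∫ s, hf c n (max t 0 + max s 0) ∂(expMeasure c)
          ≤ 1 * 1 := mul_le_mul (by linarith [Real.exp_pos (-t)]) hi1 hi0 one_pos.le
        _ = 1 := one_mul 1

lemma hf_continuous (hc : 0 < c) (n : ℕ) : Continuous (hf c n) := (hf_cont_bdd hc n).1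
lemma hf_nonneg (hc : 0 < c) (n : ℕ) {t : ℝ} (ht : 0 ≤ t) : 0 ≤ hf c n t :=
  ((hf_cont_bdd hc n).2 t ht).1
lemma hf_le_one (hc : 0 < c) (n : ℕ) {t : ℝ} (ht : 0 ≤ t) : hf c n t ≤ 1 :=
  ((hf_cont_bdd hc n).2 t ht).2

lemma hf_err (hc : 0 < c) (n : ℕ) : ∀ x : ℝ, 0 ≤ x →
    |hf c n x - Hf c x| ≤ (1 + c) * (c / (c+1))^n * rexp (-x) := by
  haveI : IsProbabilityMeasure (expMeasure c) := isProbabilityMeasure_expMeasure hc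
  induction n with
  | zero =>
    intro x hx
    simp only [hf, pow_zero, mul_one]
    rw [abs_of_nonneg (by linarith [Hf_le_one hc hx])]
    exact one_sub_Hf_le hc hx
  | succ n ih =>
    intro x hx
    have hmx : max x 0 = x := max_eq_left hx
    have he1 : rexp (-x) ≤ 1 := Real.exp_le_one_iff.mpr (by linarith)
    have he0 : 0 < rexp (-x) := Real.exp_pos _
    have hHf : Hf c x = (1 - rexp (-x)) * ∫ s, Hf c (x + max s 0) ∂(expMeasure c) := by
      rw [integral_J2 hc hx]; rfl
    have hsplit : hf c (n+1) x - Hf c x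
        = (1 - rexp (-x)) * ((∫ s, hf c n (x + max s 0) ∂(expMeasure c))
            - ∫ s, Hf c (x + max s 0) ∂(expMeasure c)) := by
      show (1 - rexp (-x)) * (∫ s, hf c n (max x 0 + max s 0) ∂(expMeasure c)) - Hf c x = _
      rw [hmx, hHf]; ring
    have hintf : Integrable (fun s => hf c n (x + max s 0)) (expMeasure c) := by
      apply Integrable.mono' (integrable_const 1)
      · exact ((hf_continuous hc n).comp
          (continuous_const.add (continuous_id.max continuous_const))).aestronglyMeasurable
      · filter_upwards with s
        have h0 : (0:ℝ) ≤ x + max s 0 := add_nonneg hx (le_max_right s 0)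
        rw [Real.norm_eq_abs, abs_le]
        exact ⟨by linarith [hf_nonneg hc n h0], hf_le_one hc n h0⟩
    have hintH : Integrable (fun s => Hf c (x + max s 0)) (expMeasure c) := by
      apply Integrable.mono' (integrable_const 1)
      · exact (continuous_Hf.comp
          (continuous_const.add (continuous_id.max continuous_const))).aestronglyMeasurable
      · filter_upwards with s
        have h0 : (0:ℝ) ≤ x + max s 0 := add_nonneg hx (le_max_right s 0)
        rw [Real.norm_eq_abs, abs_le]
        exact ⟨by linarith [Hf_nonneg (c := c) h0], Hf_le_one hc h0⟩
    have hbint : Integrable (fun s : ℝ => (1 + c) * (c / (c+1))^n * rexp (-(x + max s 0)))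
        (expMeasure c) := by
      apply Integrable.mono' (integrable_const ((1 + c) * (c / (c+1))^n))
      · apply Continuous.aestronglyMeasurable
        exact continuous_const.mul (Real.continuous_exp.comp
          (continuous_const.add (continuous_id.max continuous_const)).neg)
      · filter_upwards with s
        have h0 : (0:ℝ) ≤ x + max s 0 := add_nonneg hx (le_max_right s 0)
        have : rexp (-(x + max s 0)) ≤ 1 := Real.exp_le_one_iff.mpr (by linarith)
        rw [Real.norm_eq_abs, abs_of_nonneg (by positivity)]
        have hq : (0:ℝ) ≤ (1 + c) * (c / (c+1))^n := by positivity
        nlinarith [Real.exp_pos (-(x + max s 0))]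
    have hstep : |(∫ s, hf c n (x + max s 0) ∂(expMeasure c))
            - ∫ s, Hf c (x + max s 0) ∂(expMeasure c)|
        ≤ (1 + c) * (c / (c+1))^n * rexp (-x) * (c / (c+1)) := by
      rw [← integral_sub hintf hintH]
      calc |∫ s, (hf c n (x + max s 0) - Hf c (x + max s 0)) ∂(expMeasure c)|
          ≤ ∫ s, |hf c n (x + max s 0) - Hf c (x + max s 0)| ∂(expMeasure c) := by
            simpa [Real.norm_eq_abs] using
              norm_integral_le_integral_norm (μ := expMeasure c)
                (fun s => hf c n (x + max s 0) - Hf c (x + max s 0))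
        _ ≤ ∫ s, (1 + c) * (c / (c+1))^n * rexp (-(x + max s 0)) ∂(expMeasure c) := by
            apply integral_mono ((hintf.sub hintH).abs) hbint
            intro s
            exact ih _ (add_nonneg hx (le_max_right s 0))
        _ = (1 + c) * (c / (c+1))^n * rexp (-x) * (c / (c+1)) := by
            have : ∀ s : ℝ, (1 + c) * (c / (c+1))^n * rexp (-(x + max s 0))
                = ((1 + c) * (c / (c+1))^n * rexp (-x)) * rexp (-(max s 0)) := by
              intro s
              rw [show -(x + max s 0) = -x + -(max s 0) by ring, Real.exp_add]
              ring
            simp_rw [this]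
            rw [integral_const_mul, integral_J1 hc]
    calc |hf c (n+1) x - Hf c x|
        = |1 - rexp (-x)| * |(∫ s, hf c n (x + max s 0) ∂(expMeasure c))
            - ∫ s, Hf c (x + max s 0) ∂(expMeasure c)| := by
          rw [hsplit, abs_mul]
      _ ≤ 1 * ((1 + c) * (c / (c+1))^n * rexp (-x) * (c / (c+1))) := by
          apply mul_le_mul _ hstep (abs_nonneg _) one_pos.le
          rw [abs_of_nonneg (by linarith)]
          linarith
      _ = (1 + c) * (c / (c+1))^(n+1) * rexp (-x) := by ring

section Prob

variable {Ω : Type*} [MeasureSpace Ω] [IsProbabilityMeasure (ℙ : Measure Ω)]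

lemma KF (hc : 0 < c) (X' : ℕ → Ω → ℝ) (hm : ∀ m, Measurable (X' m))
    (hind : iIndepFun X' ℙ)
    (hmap : ∀ m, Measure.map (X' m) ℙ = expMeasure c)
    (k n : ℕ) (g : ℝ → (ℕ → ℝ) → ℝ)
    (hg : Measurable (Function.uncurry g)) (hb : ∀ y z, |g y z| ≤ 1) :
    ∫ ω, g (X' k ω) (fun j => if j < n then X' (k+1+j) ω else 0) ∂ℙ
      = ∫ y, (∫ ω, g y (fun j => if j < n then X' (k+1+j) ω else 0) ∂ℙ) ∂(expMeasure c) := by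
  haveI : IsProbabilityMeasure (expMeasure c) := isProbabilityMeasure_expMeasure hc
  set Z : Ω → ℕ → ℝ := fun ω j => if j < n then X' (k+1+j) ω else 0 with hZ
  have hZm : Measurable Z := by
    apply measurable_pi_lambda
    intro j
    by_cases h : j < n
    · simpa [hZ, h] using hm (k+1+j)
    · simpa [hZ, h] using measurable_const
  haveI : IsProbabilityMeasure (Measure.map Z ℙ) :=
    Measure.isProbabilityMeasure_map hZm.aemeasurable
  set T : Finset ℕ := Finset.Ico (k+1) (k+1+n) with hT
  have hdisj : Disjoint ({k} : Finset ℕ) T := by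
    rw [Finset.disjoint_singleton_left, hT, Finset.mem_Ico]
    omega
  have hIF := hind.indepFun_finset {k} T hdisj hm
  have hφm : Measurable (fun v : (({k} : Finset ℕ) → ℝ) => v ⟨k, by simp⟩) :=
    measurable_pi_apply _
  have hψm : Measurable (fun (v : {x // x ∈ T} → ℝ) (j : ℕ) =>
      if h : (k+1+j) ∈ T then v ⟨k+1+j, h⟩ else 0) := by
    apply measurable_pi_lambda
    intro j
    by_cases h : (k+1+j) ∈ T
    · simpa [h] using measurable_pi_apply (⟨k+1+j, h⟩ : {x // x ∈ T})
    · simpa [h] using measurable_const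
  have hcomp : IndepFun (X' k) Z ℙ := by
    have h2 := hIF.comp hφm hψm
    have e1 : (fun v : (({k} : Finset ℕ) → ℝ) => v ⟨k, by simp⟩)
        ∘ (fun ω (i : ({k} : Finset ℕ)) => X' i ω) = X' k := rfl
    have e2 : (fun (v : {x // x ∈ T} → ℝ) (j : ℕ) =>
          if h : (k+1+j) ∈ T then v ⟨k+1+j, h⟩ else 0)
        ∘ (fun ω (i : {x // x ∈ T}) => X' i ω) = Z := by
      funext ω
      funext j
      by_cases h : j < n
      · have hmem : (k+1+j) ∈ T := by rw [hT, Finset.mem_Ico]; omega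
        simp only [Function.comp_apply, dif_pos hmem, hZ, if_pos h]
      · have hmem : (k+1+j) ∉ T := by rw [hT, Finset.mem_Ico]; omega
        simp only [Function.comp_apply, dif_neg hmem, hZ, if_neg h]
    rwa [e1, e2] at h2
  have hjoint : Measure.map (fun ω => (X' k ω, Z ω)) ℙ
      = (expMeasure c).prod (Measure.map Z ℙ) := by
    rw [← hmap k]
    exact (indepFun_iff_map_prod_eq_prod_map_map
      (hm k).aemeasurable hZm.aemeasurable).mp hcomp
  have hInt : Integrable (Function.uncurry g) ((expMeasure c).prod (Measure.map Z ℙ)) := by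
    apply Integrable.mono' (integrable_const 1) hg.aestronglyMeasurable
    filter_upwards with p
    rw [Real.norm_eq_abs]
    exact hb p.1 p.2
  calc ∫ ω, g (X' k ω) (Z ω) ∂ℙ
      = ∫ p, Function.uncurry g p ∂(Measure.map (fun ω => (X' k ω, Z ω)) ℙ) := by
        rw [integral_map ((hm k).aemeasurable.prodMk hZm.aemeasurable)
          hg.aestronglyMeasurable]
        rfl
    _ = ∫ p, Function.uncurry g p ∂((expMeasure c).prod (Measure.map Z ℙ)) := by
        rw [hjoint]
    _ = ∫ y, (∫ z, g y z ∂(Measure.map Z ℙ)) ∂(expMeasure c) := integral_prod _ hInt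
    _ = ∫ y, (∫ ω, g y (Z ω) ∂ℙ) ∂(expMeasure c) := by
        congr 1
        funext y
        exact integral_map hZm.aemeasurable
          ((hg.comp measurable_prodMk_left).aestronglyMeasurable)

lemma prod_bounds (S : Finset ℕ) (a : ℕ → ℝ) (ha : ∀ i ∈ S, 0 ≤ a i) :
    0 ≤ ∏ i ∈ S, (1 - rexp (-(a i))) ∧ (∏ i ∈ S, (1 - rexp (-(a i)))) ≤ 1 := by
  constructor
  · apply Finset.prod_nonneg
    intro i hi
    have : rexp (-(a i)) ≤ 1 := Real.exp_le_one_iff.mpr (by linarith [ha i hi])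
    linarith
  · apply Finset.prod_le_one
    · intro i hi
      have : rexp (-(a i)) ≤ 1 := Real.exp_le_one_iff.mpr (by linarith [ha i hi])
      linarith
    · intro i hi
      linarith [Real.exp_pos (-(a i))]

lemma sum_split (X' : ℕ → Ω → ℝ) (k i : ℕ) (ω : Ω) :
    ∑ j ∈ Finset.range (i+1), X' (k+j) ω
      = X' k ω + ∑ j ∈ Finset.range i, X' (k+1+j) ω := by
  rw [Finset.sum_range_succ']
  have h : ∀ j ∈ Finset.range i, X' (k+(j+1)) ω = X' (k+1+j) ω := by
    intro j _
    rw [show k+(j+1) = k+1+j by omega]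
  rw [Finset.sum_congr rfl h, show k + 0 = k from rfl]
  exact add_comm _ _

lemma LA (hc : 0 < c) (X' : ℕ → Ω → ℝ) (hm : ∀ m, Measurable (X' m))
    (hind : iIndepFun X' ℙ)
    (hmap : ∀ m, Measure.map (X' m) ℙ = expMeasure c)
    (hpos : ∀ m ω, 0 ≤ X' m ω) (n : ℕ) :
    ∀ (k : ℕ) (x : ℝ), 0 ≤ x →
    ∫ ω, ∏ i ∈ Finset.range n, (1 - rexp (-(x + ∑ j ∈ Finset.range i, X' (k+j) ω))) ∂ℙ
      = hf c n x := by
  haveI : IsProbabilityMeasure (expMeasure c) := isProbabilityMeasure_expMeasure hc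
  induction n with
  | zero =>
    intro k x hx
    simp [hf]
  | succ n ih =>
    intro k x hx
    set g : ℝ → (ℕ → ℝ) → ℝ := fun y z =>
      (∏ i ∈ Finset.range n,
        (1 - rexp (-((x + max y 0) + ∑ j ∈ Finset.range i, max (z j) 0)))) * (1 - rexp (-x))
      with hgdef
    have hgcont : Continuous (Function.uncurry g) := by
      apply Continuous.mul _ continuous_const
      apply continuous_finset_prod
      intro i _
      apply Continuous.sub continuous_const
      apply Real.continuous_exp.comp
      apply Continuous.neg
      exact (continuous_const.add (continuous_fst.max continuous_const)).add
        (continuous_finset_sum _ fun j _ =>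
          ((continuous_apply j).comp continuous_snd).max continuous_const)
    have hgb : ∀ y z, |g y z| ≤ 1 := by
      intro y z
      simp only [hgdef]
      rw [abs_le]
      have harg : ∀ i : ℕ, (0:ℝ) ≤ x + max y 0 + ∑ j ∈ Finset.range i, max (z j) 0 :=
        fun i => add_nonneg (add_nonneg hx (le_max_right y 0))
          (Finset.sum_nonneg fun j _ => le_max_right (z j) 0)
      have hp0 : 0 ≤ ∏ i ∈ Finset.range n,
          (1 - rexp (-(x + max y 0 + ∑ j ∈ Finset.range i, max (z j) 0))) :=
        Finset.prod_nonneg fun i _ => by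
          have := Real.exp_le_one_iff.mpr (neg_nonpos.mpr (harg i)); linarith
      have hp1 : (∏ i ∈ Finset.range n,
          (1 - rexp (-(x + max y 0 + ∑ j ∈ Finset.range i, max (z j) 0)))) ≤ 1 :=
        Finset.prod_le_one
          (fun i _ => by
            have := Real.exp_le_one_iff.mpr (neg_nonpos.mpr (harg i)); linarith)
          (fun i _ => by
            have := Real.exp_pos (-(x + max y 0 + ∑ j ∈ Finset.range i, max (z j) 0)); linarith)
      have h2 : rexp (-x) ≤ 1 := Real.exp_le_one_iff.mpr (by linarith)
      have h3 : 0 < rexp (-x) := Real.exp_pos _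
      constructor
      · nlinarith
      · nlinarith
    have key := KF hc X' hm hind hmap k n g hgcont.measurable hgb
    have heq1 : ∀ ω, ∏ i ∈ Finset.range (n+1),
          (1 - rexp (-(x + ∑ j ∈ Finset.range i, X' (k+j) ω)))
        = g (X' k ω) (fun j => if j < n then X' (k+1+j) ω else 0) := by
      intro ω
      rw [Finset.prod_range_succ']
      simp only [hgdef]
      congr 1
      · refine Finset.prod_congr rfl fun i hi => ?_
        have hi' : i < n := Finset.mem_range.mp hi
        have hs : ∑ j ∈ Finset.range i, max (if j < n then X' (k+1+j) ω else 0) 0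
            = ∑ j ∈ Finset.range i, X' (k+1+j) ω :=
          Finset.sum_congr rfl fun j hj => by
            rw [if_pos (lt_trans (Finset.mem_range.mp hj) hi'), max_eq_left (hpos _ ω)]
        rw [hs, max_eq_left (hpos k ω), sum_split X' k i ω, ← add_assoc]
      · simp
    have heq2 : ∀ y : ℝ, ∫ ω, g y (fun j => if j < n then X' (k+1+j) ω else 0) ∂ℙ
        = hf c n (x + max y 0) * (1 - rexp (-x)) := by
      intro y
      have hptw : ∀ ω, g y (fun j => if j < n then X' (k+1+j) ω else 0)
          = (∏ i ∈ Finset.range n,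
              (1 - rexp (-((x + max y 0) + ∑ j ∈ Finset.range i, X' ((k+1)+j) ω))))
            * (1 - rexp (-x)) := by
        intro ω
        simp only [hgdef]
        congr 1
        refine Finset.prod_congr rfl fun i hi => ?_
        have hi' : i < n := Finset.mem_range.mp hi
        have hs : ∑ j ∈ Finset.range i, max (if j < n then X' (k+1+j) ω else 0) 0
            = ∑ j ∈ Finset.range i, X' (k+1+j) ω :=
          Finset.sum_congr rfl fun j hj => by
            rw [if_pos (lt_trans (Finset.mem_range.mp hj) hi'), max_eq_left (hpos _ ω)]
        rw [hs]
      simp_rw [hptw]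
      rw [integral_mul_const]
      congr 1
      exact ih (k+1) (x + max y 0) (add_nonneg hx (le_max_right y 0))
    calc ∫ ω, ∏ i ∈ Finset.range (n+1),
          (1 - rexp (-(x + ∑ j ∈ Finset.range i, X' (k+j) ω))) ∂ℙ
        = ∫ ω, g (X' k ω) (fun j => if j < n then X' (k+1+j) ω else 0) ∂ℙ := by
          apply integral_congr_ae
          filter_upwards with ω
          exact heq1 ω
      _ = ∫ y, (∫ ω, g y (fun j => if j < n then X' (k+1+j) ω else 0) ∂ℙ) ∂(expMeasure c)
          := key
      _ = ∫ y, hf c n (x + max y 0) * (1 - rexp (-x)) ∂(expMeasure c) := by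
          apply integral_congr_ae
          filter_upwards with y
          exact heq2 y
      _ = hf c (n+1) x := by
          show _ = (1 - rexp (-x)) * ∫ s, hf c n (max x 0 + max s 0) ∂(expMeasure c)
          rw [integral_mul_const, mul_comm]
          congr 1
          apply integral_congr_ae
          filter_upwards with y
          rw [max_eq_left hx]

lemma LB (hc : 0 < c) (X' : ℕ → Ω → ℝ) (hm : ∀ m, Measurable (X' m))
    (hind : iIndepFun X' ℙ)
    (hmap : ∀ m, Measure.map (X' m) ℙ = expMeasure c)
    (hpos : ∀ m ω, 0 ≤ X' m ω) (n : ℕ) :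
    ∀ (k : ℕ),
    ∫ ω, rexp (-(∑ j ∈ Finset.range n, X' (k+j) ω)) ∂ℙ = (c/(c+1))^n := by
  haveI : IsProbabilityMeasure (expMeasure c) := isProbabilityMeasure_expMeasure hc
  induction n with
  | zero => intro k; simp
  | succ n ih =>
    intro k
    set g : ℝ → (ℕ → ℝ) → ℝ := fun y z =>
      rexp (-(max y 0)) * rexp (-(∑ j ∈ Finset.range n, max (z j) 0)) with hgdef
    have hgcont : Continuous (Function.uncurry g) := by
      apply Continuous.mul
      · exact Real.continuous_exp.comp (continuous_fst.max continuous_const).neg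
      · exact Real.continuous_exp.comp
          (continuous_finset_sum _ fun j _ =>
            ((continuous_apply j).comp continuous_snd).max continuous_const).neg
    have hgb : ∀ y z, |g y z| ≤ 1 := by
      intro y z
      have h1 : rexp (-(max y 0)) ≤ 1 := Real.exp_le_one_iff.mpr (by
        simp [le_max_right])
      have h2 : rexp (-(∑ j ∈ Finset.range n, max (z j) 0)) ≤ 1 :=
        Real.exp_le_one_iff.mpr (neg_nonpos.mpr
          (Finset.sum_nonneg fun j _ => le_max_right (z j) 0))
      simp only [hgdef]
      rw [abs_le]
      constructor
      · nlinarith [Real.exp_pos (-(max y 0)), Real.exp_pos (-(∑ j ∈ Finset.range n, max (z j) 0))]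
      · nlinarith [Real.exp_pos (-(max y 0)), Real.exp_pos (-(∑ j ∈ Finset.range n, max (z j) 0))]
    have key := KF hc X' hm hind hmap k n g hgcont.measurable hgb
    have heq1 : ∀ ω, rexp (-(∑ j ∈ Finset.range (n+1), X' (k+j) ω))
        = g (X' k ω) (fun j => if j < n then X' (k+1+j) ω else 0) := by
      intro ω
      simp only [hgdef]
      rw [← Real.exp_add]
      congr 1
      have hs : ∑ j ∈ Finset.range n, max (if j < n then X' (k+1+j) ω else 0) 0
          = ∑ j ∈ Finset.range n, X' (k+1+j) ω :=
        Finset.sum_congr rfl fun j hj => by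
          rw [if_pos (Finset.mem_range.mp hj), max_eq_left (hpos _ ω)]
      rw [hs, max_eq_left (hpos k ω), sum_split X' k n ω]
      ring
    have heq2 : ∀ y : ℝ, ∫ ω, g y (fun j => if j < n then X' (k+1+j) ω else 0) ∂ℙ
        = rexp (-(max y 0)) * (c/(c+1))^n := by
      intro y
      have hptw : ∀ ω, g y (fun j => if j < n then X' (k+1+j) ω else 0)
          = rexp (-(max y 0)) * rexp (-(∑ j ∈ Finset.range n, X' ((k+1)+j) ω)) := by
        intro ω
        simp only [hgdef]
        have hs : ∑ j ∈ Finset.range n, max (if j < n then X' (k+1+j) ω else 0) 0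
            = ∑ j ∈ Finset.range n, X' ((k+1)+j) ω :=
          Finset.sum_congr rfl fun j hj => by
            rw [if_pos (Finset.mem_range.mp hj), max_eq_left (hpos _ ω)]
        rw [hs]
      simp_rw [hptw]
      rw [integral_const_mul, ih (k+1)]
    calc ∫ ω, rexp (-(∑ j ∈ Finset.range (n+1), X' (k+j) ω)) ∂ℙ
        = ∫ ω, g (X' k ω) (fun j => if j < n then X' (k+1+j) ω else 0) ∂ℙ := by
          apply integral_congr_ae; filter_upwards with ω; exact heq1 ω
      _ = ∫ y, (∫ ω, g y (fun j => if j < n then X' (k+1+j) ω else 0) ∂ℙ) ∂(expMeasure c)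
          := key
      _ = ∫ y, rexp (-(max y 0)) * (c/(c+1))^n ∂(expMeasure c) := by
          apply integral_congr_ae; filter_upwards with y; exact heq2 y
      _ = (c/(c+1))^(n+1) := by
          rw [integral_mul_const, integral_J1 hc]
          ring

lemma hFn (hc : 0 < c) (X' : ℕ → Ω → ℝ) (hm : ∀ m, Measurable (X' m))
    (hind : iIndepFun X' ℙ)
    (hmap : ∀ m, Measure.map (X' m) ℙ = expMeasure c)
    (hpos : ∀ m ω, 0 ≤ X' m ω) (n : ℕ) :
    ∫ ω, ∏ i ∈ Finset.range n,
        (1 - rexp (-(∑ j ∈ Finset.range (i+1), X' (0+j) ω))) ∂ℙ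
      = ∫ y, hf c n (max y 0) ∂(expMeasure c) := by
  haveI : IsProbabilityMeasure (expMeasure c) := isProbabilityMeasure_expMeasure hc
  set g : ℝ → (ℕ → ℝ) → ℝ := fun y z =>
    ∏ i ∈ Finset.range n,
      (1 - rexp (-(max y 0 + ∑ j ∈ Finset.range i, max (z j) 0))) with hgdef
  have hgcont : Continuous (Function.uncurry g) := by
    apply continuous_finset_prod
    intro i _
    apply Continuous.sub continuous_const
    apply Real.continuous_exp.comp
    apply Continuous.neg
    exact (continuous_fst.max continuous_const).add
      (continuous_finset_sum _ fun j _ =>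
        ((continuous_apply j).comp continuous_snd).max continuous_const)
  have hgb : ∀ y z, |g y z| ≤ 1 := by
    intro y z
    simp only [hgdef]
    rw [abs_le]
    have harg : ∀ i : ℕ, (0:ℝ) ≤ max y 0 + ∑ j ∈ Finset.range i, max (z j) 0 :=
      fun i => add_nonneg (le_max_right y 0)
        (Finset.sum_nonneg fun j _ => le_max_right (z j) 0)
    have hp0 : 0 ≤ ∏ i ∈ Finset.range n,
        (1 - rexp (-(max y 0 + ∑ j ∈ Finset.range i, max (z j) 0))) :=
      Finset.prod_nonneg fun i _ => by
        have := Real.exp_le_one_iff.mpr (neg_nonpos.mpr (harg i)); linarith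
    have hp1 : (∏ i ∈ Finset.range n,
        (1 - rexp (-(max y 0 + ∑ j ∈ Finset.range i, max (z j) 0)))) ≤ 1 :=
      Finset.prod_le_one
        (fun i _ => by
          have := Real.exp_le_one_iff.mpr (neg_nonpos.mpr (harg i)); linarith)
        (fun i _ => by
          have := Real.exp_pos (-(max y 0 + ∑ j ∈ Finset.range i, max (z j) 0)); linarith)
    exact ⟨by linarith, hp1⟩
  have key := KF hc X' hm hind hmap 0 n g hgcont.measurable hgb
  have heq1 : ∀ ω, ∏ i ∈ Finset.range n,
        (1 - rexp (-(∑ j ∈ Finset.range (i+1), X' (0+j) ω)))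
      = g (X' 0 ω) (fun j => if j < n then X' (0+1+j) ω else 0) := by
    intro ω
    simp only [hgdef]
    refine Finset.prod_congr rfl fun i hi => ?_
    have hi' : i < n := Finset.mem_range.mp hi
    have hs : ∑ j ∈ Finset.range i, max (if j < n then X' (0+1+j) ω else 0) 0
        = ∑ j ∈ Finset.range i, X' (0+1+j) ω :=
      Finset.sum_congr rfl fun j hj => by
        rw [if_pos (lt_trans (Finset.mem_range.mp hj) hi'), max_eq_left (hpos _ ω)]
    rw [hs, max_eq_left (hpos 0 ω), sum_split X' 0 i ω]
  have heq2 : ∀ y : ℝ, ∫ ω, g y (fun j => if j < n then X' (0+1+j) ω else 0) ∂ℙ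
      = hf c n (max y 0) := by
    intro y
    have hptw : ∀ ω, g y (fun j => if j < n then X' (0+1+j) ω else 0)
        = ∏ i ∈ Finset.range n,
            (1 - rexp (-(max y 0 + ∑ j ∈ Finset.range i, X' (1+j) ω))) := by
      intro ω
      simp only [hgdef]
      refine Finset.prod_congr rfl fun i hi => ?_
      have hi' : i < n := Finset.mem_range.mp hi
      have hs : ∑ j ∈ Finset.range i, max (if j < n then X' (0+1+j) ω else 0) 0
          = ∑ j ∈ Finset.range i, X' (1+j) ω :=
        Finset.sum_congr rfl fun j hj => by
          rw [if_pos (lt_trans (Finset.mem_range.mp hj) hi'), max_eq_left (hpos _ ω),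
            show 0+1+j = 1+j from rfl]
      rw [hs]
    simp_rw [hptw]
    exact LA hc X' hm hind hmap hpos n 1 (max y 0) (le_max_right y 0)
  calc ∫ ω, ∏ i ∈ Finset.range n,
        (1 - rexp (-(∑ j ∈ Finset.range (i+1), X' (0+j) ω))) ∂ℙ
      = ∫ ω, g (X' 0 ω) (fun j => if j < n then X' (0+1+j) ω else 0) ∂ℙ := by
        apply integral_congr_ae; filter_upwards with ω; exact heq1 ω
    _ = ∫ y, (∫ ω, g y (fun j => if j < n then X' (0+1+j) ω else 0) ∂ℙ) ∂(expMeasure c)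
        := key
    _ = ∫ y, hf c n (max y 0) ∂(expMeasure c) := by
        apply integral_congr_ae; filter_upwards with y; exact heq2 y

end Prob

lemma log_one_sub_bound {t : ℝ} (h0 : 0 ≤ t) (h2 : t ≤ 1/2) : |Real.log (1 - t)| ≤ 2 * t := by
  have hpos : (0:ℝ) < 1 - t := by linarith
  have hle : Real.log (1 - t) ≤ 0 := Real.log_nonpos (by linarith) (by linarith)
  rw [abs_of_nonpos hle]
  have hexp : 1 + 2*t ≤ rexp (2*t) := by linarith [Real.add_one_le_exp (2*t)]
  have hPE : rexp (-(2*t)) * rexp (2*t) = 1 := by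
    rw [← Real.exp_add]; norm_num
  have h3 : rexp (-(2*t)) ≤ 1 - t := by
    nlinarith [Real.exp_pos (-(2*t)), Real.exp_pos (2*t)]
  linarith [(Real.le_log_iff_exp_le hpos).mpr h3]

lemma multipliable_of_pos_summable_log {f : ℕ → ℝ} (hp : ∀ i, 0 < f i)
    (h : Summable fun i => Real.log (f i)) : Multipliable f := by
  refine ⟨rexp (∑' i, Real.log (f i)), ?_⟩
  have h2 := (Real.continuous_exp.tendsto _).comp h.hasSum
  apply Filter.Tendsto.congr _ h2
  intro s
  simp only [Function.comp_apply]
  rw [Real.exp_sum]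
  exact Finset.prod_congr rfl fun i _ => Real.exp_log (hp i)

end Stmt4Aux

open Stmt4Aux Real Set Filter MeasureTheory ProbabilityTheory

/-- Let `(γ_j)_{j≥1}` be the partial sums of i.i.d. exponential(c) random
variables. Then `E[∏_{i=1}^∞ (1 − e^{−γ_i})] = e^{−c}`. -/
theorem stmt_4 {Ω : Type*} [MeasureSpace Ω] [IsProbabilityMeasure (ℙ : Measure Ω)]
    (c : ℝ) (hc : 0 < c) (X : ℕ → Ω → ℝ)
    (hmeas : ∀ m, Measurable (X m))
    (hindep : iIndepFun X ℙ)
    (hdist : ∀ m, Measure.map (X m) ℙ = expMeasure c)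
    (γ : ℕ → Ω → ℝ) (hγ : ∀ j ω, γ j ω = ∑ m ∈ Finset.range j, X m ω) :
    (∀ᵐ ω ∂ℙ, Multipliable (fun i : ℕ => 1 - Real.exp (-γ (i + 1) ω))) ∧
    ∫ ω, ∏' i : ℕ, (1 - Real.exp (-γ (i + 1) ω)) ∂ℙ = Real.exp (-c) := by
  classical
  haveI hPexp : IsProbabilityMeasure (expMeasure c) := isProbabilityMeasure_expMeasure hc
  set X' : ℕ → Ω → ℝ := fun m ω => max (X m ω) 0 with hX'
  have hm' : ∀ m, Measurable (X' m) := fun m => (hmeas m).max measurable_const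
  have hpos' : ∀ m ω, 0 ≤ X' m ω := fun m ω => le_max_right _ _
  -- a.e. positivity of X m
  have haeX : ∀ m : ℕ, ∀ᵐ ω ∂ℙ, 0 < X m ω := by
    intro m
    have h1 : ℙ (X m ⁻¹' (Iic 0)) = 0 := by
      have h2 := Measure.map_apply (μ := ℙ) (hmeas m)
        (measurableSet_Iic : MeasurableSet (Iic (0:ℝ)))
      rw [hdist m] at h2
      rw [← h2]
      have h3 : expMeasure c {(0:ℝ)} = 0 := by
        have hvol : (volume : Measure ℝ) {(0:ℝ)} = 0 := measure_singleton 0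
        exact measure_mono_null (by simp) <|
          (withDensity_absolutelyContinuous volume (exponentialPDF c)) hvol
      have : expMeasure c (Iic 0) = 0 := by
        rw [show Iic (0:ℝ) = Iio 0 ∪ {0} by ext s; simp [le_iff_lt_or_eq]]
        exact measure_union_null (expMeasure_Iio hc) h3
      exact this
    rw [ae_iff]
    convert h1 using 2
    ext ω; simp [not_lt]
  have haeAll : ∀ᵐ ω ∂ℙ, ∀ m : ℕ, 0 < X m ω := ae_all_iff.mpr haeX
  have haeEq : ∀ m : ℕ, X' m =ᵐ[ℙ] X m := by
    intro m
    filter_upwards [haeX m] with ω h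
    exact max_eq_left (le_of_lt h)
  have hmap' : ∀ m, Measure.map (X' m) ℙ = expMeasure c := fun m => by
    rw [Measure.map_congr (haeEq m), hdist m]
  -- independence of X'
  have hind' : iIndepFun X' ℙ := by
    rw [iIndepFun_iff_measure_inter_preimage_eq_mul]
    rw [iIndepFun_iff_measure_inter_preimage_eq_mul] at hindep
    intro S sets H
    have hA : ∀ i : ℕ, (X' i ⁻¹' sets i : Set Ω) =ᵐ[ℙ] (X i ⁻¹' sets i) := by
      intro i
      filter_upwards [haeEq i] with ω h
      show (X' i ω ∈ sets i) = (X i ω ∈ sets i)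
      rw [h]
    have h1 : ℙ (⋂ i ∈ S, X' i ⁻¹' sets i) = ℙ (⋂ i ∈ S, X i ⁻¹' sets i) := by
      apply measure_congr
      filter_upwards [ae_all_iff.mpr haeEq] with ω h
      show (ω ∈ ⋂ i ∈ S, X' i ⁻¹' sets i) = (ω ∈ ⋂ i ∈ S, X i ⁻¹' sets i)
      simp only [Set.mem_iInter, Set.mem_preimage, h]
    rw [h1, hindep S H]
    exact Finset.prod_congr rfl fun i _ => measure_congr (hA i).symm
  -- γ measurable
  have hγm : ∀ j, Measurable (γ j) := by
    intro j
    have : γ j = fun ω => ∑ m ∈ Finset.range j, X m ω := funext fun ω => hγ j ω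
    rw [this]
    exact Finset.measurable_sum _ fun m _ => hmeas m
  set q : ℝ := c / (c + 1) with hq
  have hq0 : 0 ≤ q := by positivity
  have hq1 : q < 1 := by
    rw [hq, div_lt_one (by linarith)]; linarith
  -- a.e. summability
  have hsumae : ∀ᵐ ω ∂ℙ,
      Summable (fun i => rexp (-(∑ j ∈ Finset.range (i+1), X' (0+j) ω))) := by
    have hmi : ∀ i : ℕ, Measurable (fun ω =>
        ENNReal.ofReal (rexp (-(∑ j ∈ Finset.range (i+1), X' (0+j) ω)))) := by
      intro i
      exact ((Finset.measurable_sum _ fun j _ => hm' (0+j)).neg.exp).ennreal_ofReal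
    have hInt : ∀ i : ℕ, Integrable
        (fun ω => rexp (-(∑ j ∈ Finset.range (i+1), X' (0+j) ω))) ℙ := by
      intro i
      apply Integrable.mono' (integrable_const 1)
      · exact ((Finset.measurable_sum _ fun j _ => hm' (0+j)).neg.exp).aestronglyMeasurable
      · filter_upwards with ω
        rw [Real.norm_eq_abs, abs_of_pos (Real.exp_pos _)]
        exact Real.exp_le_one_iff.mpr (neg_nonpos.mpr
          (Finset.sum_nonneg fun j _ => hpos' _ ω))
    have hlin : ∫⁻ ω, ∑' i, ENNReal.ofReal
          (rexp (-(∑ j ∈ Finset.range (i+1), X' (0+j) ω))) ∂ℙ ≠ ⊤ := by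
      rw [lintegral_tsum (fun i => (hmi i).aemeasurable)]
      have hval : ∀ i : ℕ, ∫⁻ ω, ENNReal.ofReal
            (rexp (-(∑ j ∈ Finset.range (i+1), X' (0+j) ω))) ∂ℙ
          = ENNReal.ofReal q ^ (i+1) := by
        intro i
        rw [← ofReal_integral_eq_lintegral_ofReal (hInt i)
          (by filter_upwards with ω; exact le_of_lt (Real.exp_pos _))]
        rw [LB hc X' hm' hind' hmap' hpos' (i+1) 0]
        rw [← hq, ENNReal.ofReal_pow hq0]
      simp_rw [hval]
      have hlt : ENNReal.ofReal q < 1 := by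
        rw [show (1:ℝ≥0∞) = ENNReal.ofReal 1 by simp]
        exact (ENNReal.ofReal_lt_ofReal_iff one_pos).mpr hq1
      have hsum : ∑' i : ℕ, ENNReal.ofReal q ^ (i+1)
          = ENNReal.ofReal q * (1 - ENNReal.ofReal q)⁻¹ := by
        simp_rw [pow_succ, mul_comm]
        rw [ENNReal.tsum_mul_left, ENNReal.tsum_geometric]
      rw [hsum]
      apply ENNReal.mul_ne_top ENNReal.ofReal_ne_top
      rw [Ne, ENNReal.inv_eq_top]
      exact (tsub_pos_iff_lt.mpr hlt).ne'
    have hfin := ae_lt_top (by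
      apply Measurable.ennreal_tsum hmi) hlin
    filter_upwards [hfin] with ω hω
    have hs := ENNReal.summable_toReal hω.ne
    apply hs.congr
    intro i
    rw [ENNReal.toReal_ofReal (le_of_lt (Real.exp_pos _))]
  -- identify γ sums with X' sums a.e.
  have haeγ : ∀ᵐ ω ∂ℙ, ∀ i : ℕ,
      γ (i+1) ω = ∑ j ∈ Finset.range (i+1), X' (0+j) ω := by
    filter_upwards [ae_all_iff.mpr haeEq] with ω h
    intro i
    rw [hγ]
    exact Finset.sum_congr rfl fun j _ => by rw [Nat.zero_add, h j]
  -- a.e. multipliability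
  have hmultae : ∀ᵐ ω ∂ℙ, Multipliable (fun i : ℕ => 1 - rexp (-γ (i + 1) ω)) := by
    filter_upwards [haeAll, hsumae, haeγ] with ω hp hs hγω
    have hγpos : ∀ i : ℕ, 0 < γ (i+1) ω := by
      intro i
      rw [hγ]
      apply Finset.sum_pos (fun m _ => hp m)
      exact Finset.nonempty_range_iff.mpr (Nat.succ_ne_zero i)
    have hs' : Summable (fun i : ℕ => rexp (-γ (i+1) ω)) := by
      apply hs.congr
      intro i
      rw [hγω i]
    apply multipliable_of_pos_summable_log
    · intro i
      have : rexp (-γ (i+1) ω) < 1 := by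
        rw [Real.exp_lt_one_iff]
        linarith [hγpos i]
      linarith
    · apply Summable.of_norm_bounded_eventually_nat
        (g := fun i => 2 * rexp (-γ (i+1) ω)) (hs'.mul_left 2)
      have hev : ∀ᶠ i : ℕ in atTop, rexp (-γ (i+1) ω) < 1/2 :=
        hs'.tendsto_atTop_zero.eventually_lt_const (by norm_num)
      filter_upwards [hev] with i hi
      rw [Real.norm_eq_abs]
      have := log_one_sub_bound (le_of_lt (Real.exp_pos (-γ (i+1) ω))) (le_of_lt hi)
      exact this
  refine ⟨hmultae, ?_⟩
  -- dominated convergence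
  have hPmeas : ∀ n : ℕ, AEStronglyMeasurable
      (fun ω => ∏ i ∈ Finset.range n, (1 - rexp (-γ (i+1) ω))) ℙ := by
    intro n
    exact (Finset.measurable_prod _ fun i _ =>
      (measurable_const.sub ((hγm (i+1)).neg.exp))).aestronglyMeasurable
  have hbound : ∀ n : ℕ, ∀ᵐ ω ∂ℙ,
      ‖∏ i ∈ Finset.range n, (1 - rexp (-γ (i+1) ω))‖ ≤ 1 := by
    intro n
    filter_upwards [haeAll] with ω hp
    have hb := prod_bounds (Finset.range n) (fun i => γ (i+1) ω) (fun i _ => by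
      show (0:ℝ) ≤ γ (i+1) ω
      rw [hγ]
      exact Finset.sum_nonneg fun m _ => le_of_lt (hp m))
    rw [Real.norm_eq_abs, abs_le]
    exact ⟨by linarith [hb.1], hb.2⟩
  have hlim : ∀ᵐ ω ∂ℙ, Tendsto (fun n => ∏ i ∈ Finset.range n, (1 - rexp (-γ (i+1) ω)))
      atTop (𝓝 (∏' i : ℕ, (1 - rexp (-γ (i+1) ω)))) := by
    filter_upwards [hmultae] with ω hω
    exact hω.hasProd.tendsto_prod_nat
  have hDC := tendsto_integral_of_dominated_convergence (μ := ℙ)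
    (F := fun n ω => ∏ i ∈ Finset.range n, (1 - rexp (-γ (i+1) ω)))
    (f := fun ω => ∏' i : ℕ, (1 - rexp (-γ (i+1) ω)))
    (fun _ => (1:ℝ)) hPmeas (integrable_const 1) hbound hlim
  -- identify finite-n integrals
  have hFeq : ∀ n : ℕ, ∫ ω, ∏ i ∈ Finset.range n, (1 - rexp (-γ (i+1) ω)) ∂ℙ
      = ∫ y, hf c n (max y 0) ∂(expMeasure c) := by
    intro n
    rw [← hFn hc X' hm' hind' hmap' hpos' n]
    apply integral_congr_ae
    filter_upwards [haeγ] with ω h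
    exact Finset.prod_congr rfl fun i _ => by rw [h i]
  -- limit of the finite-n integrals
  have hHint : ∫ y, Hf c (max y 0) ∂(expMeasure c) = rexp (-c) := by
    have := integral_J2 hc (x := 0) le_rfl
    simp only [zero_add] at this
    rw [this]
    norm_num
  have htendF : Tendsto (fun n => ∫ y, hf c n (max y 0) ∂(expMeasure c))
      atTop (𝓝 (rexp (-c))) := by
    have hdiff : ∀ n : ℕ, |(∫ y, hf c n (max y 0) ∂(expMeasure c)) - rexp (-c)|
        ≤ (1 + c) * q ^ n := by
      intro n
      rw [← hHint]
      have hintf : Integrable (fun y => hf c n (max y 0)) (expMeasure c) := by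
        apply Integrable.mono' (integrable_const 1)
        · exact ((hf_continuous hc n).comp
            (continuous_id.max continuous_const)).aestronglyMeasurable
        · filter_upwards with y
          rw [Real.norm_eq_abs, abs_le]
          exact ⟨by linarith [hf_nonneg hc n (le_max_right y 0)],
            hf_le_one hc n (le_max_right y 0)⟩
      have hintH : Integrable (fun y => Hf c (max y 0)) (expMeasure c) := by
        apply Integrable.mono' (integrable_const 1)
        · exact (continuous_Hf.comp
            (continuous_id.max continuous_const)).aestronglyMeasurable
        · filter_upwards with y
          rw [Real.norm_eq_abs, abs_le]
          exact ⟨by linarith [Hf_nonneg (c := c) (le_max_right y 0)],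
            Hf_le_one hc (le_max_right y 0)⟩
      rw [← integral_sub hintf hintH]
      calc |∫ y, (hf c n (max y 0) - Hf c (max y 0)) ∂(expMeasure c)|
          ≤ ∫ y, |hf c n (max y 0) - Hf c (max y 0)| ∂(expMeasure c) := by
            simpa [Real.norm_eq_abs] using
              norm_integral_le_integral_norm (μ := expMeasure c)
                (fun y => hf c n (max y 0) - Hf c (max y 0))
        _ ≤ ∫ _y, (1 + c) * q ^ n ∂(expMeasure c) := by
            apply integral_mono ((hintf.sub hintH).abs) (integrable_const _)
            intro y
            calc |hf c n (max y 0) - Hf c (max y 0)|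
                ≤ (1 + c) * (c/(c+1)) ^ n * rexp (-(max y 0)) :=
                  hf_err hc n (max y 0) (le_max_right y 0)
              _ ≤ (1 + c) * q ^ n := by
                  have h1 : rexp (-(max y 0)) ≤ 1 :=
                    Real.exp_le_one_iff.mpr (neg_nonpos.mpr (le_max_right y 0))
                  have h2 : (0:ℝ) ≤ (1 + c) * (c/(c+1)) ^ n := by positivity
                  rw [hq]
                  nlinarith [Real.exp_pos (-(max y 0))]
        _ = (1 + c) * q ^ n := by simp
    have hz : Tendsto (fun n : ℕ => (1 + c) * q ^ n) atTop (𝓝 0) := by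
      have := tendsto_pow_atTop_nhds_zero_of_lt_one hq0 hq1
      simpa using this.const_mul (1 + c)
    have hz2 : Tendsto (fun n => (∫ y, hf c n (max y 0) ∂(expMeasure c)) - rexp (-c))
        atTop (𝓝 0) := by
      apply squeeze_zero_norm _ hz
      intro n
      rw [Real.norm_eq_abs]
      exact hdiff n
    have := hz2.add_const (rexp (-c))
    simpa using this
  -- conclude
  have hDC' : Tendsto (fun n => ∫ ω, ∏ i ∈ Finset.range n, (1 - rexp (-γ (i+1) ω)) ∂ℙ)
      atTop (𝓝 (rexp (-c))) := by
    apply htendF.congr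
    intro n
    exact (hFeq n).symm
  exact tendsto_nhds_unique hDC hDC'
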